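/- Let R > 0 and let Π be a measurable real-valued function on D = {(x,y) ∈ ℝ² : 0 ≤ x ≤ y}. Assume there exist α ∈ (0, 1/2) and a constant c > 0 such that |Π(x,y)| ≤ c·((x/y)^{2α} + (y/x)^{2α})/(x−y)² for all y > x ≥ R. Then ∫∫_{{(x,y) : R ≤ x ≤ y}} |φ^{(R,T)}(x) − φ^{(R,T)}(y)|² · |Π(x,y)| dx dy → 0 as T → ∞. -/

import Mathlib

open MeasureTheory Filter

/-- The cutoff function `φ^{(R,T)}`: equal to `1` on `(-∞, R]`, to
`1 - log(x-R+1)/log(T-R+1)` on `[R, T]`, and to `0` on `[T, ∞)`. -/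
noncomputable def phi (R T x : ℝ) : ℝ :=
  if x ≤ R then 1
  else if x ≤ T then 1 - Real.log (x - R + 1) / Real.log (T - R + 1)
  else 0

/-- The comparison kernel `h(t) = (log t)^2 t^(2α) / (t-1)^2`. -/
noncomputable def hfun (α t : ℝ) : ℝ := (Real.log t)^2 * t ^ (2*α) / (t-1)^2

lemma hfun_nonneg {α t : ℝ} (ht : 0 ≤ t) : 0 ≤ hfun α t := by
  unfold hfun; positivity

lemma hfun_meas (α : ℝ) : Measurable (hfun α) := by
  unfold hfun; measurability

open Set in
lemma hfun_integrableOn {α : ℝ} (hα0 : 0 < α) (hα : α < 1/2) :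
    IntegrableOn (hfun α) (Ioi 1) := by
  have h2 : (Ioc (1:ℝ) 2) ∪ Ioi 2 = Ioi 1 := Ioc_union_Ioi_eq_Ioi (by norm_num)
  rw [← h2]
  apply IntegrableOn.union
  · apply Measure.integrableOn_of_bounded (M := 2) measure_Ioc_lt_top.ne
      (hfun_meas α).aestronglyMeasurable
    filter_upwards [ae_restrict_mem measurableSet_Ioc] with t ht
    have h1t : (1:ℝ) < t := ht.1
    rw [Real.norm_eq_abs, abs_of_nonneg (hfun_nonneg (by linarith))]
    have hlog : Real.log t ≤ t - 1 := Real.log_le_sub_one_of_pos (by linarith)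
    have hlog0 : 0 ≤ Real.log t := Real.log_nonneg h1t.le
    have hrp : t ^ (2*α) ≤ 2 := by
      calc t ^ (2*α) ≤ t ^ (1:ℝ) :=
            Real.rpow_le_rpow_of_exponent_le h1t.le (by linarith)
        _ = t := Real.rpow_one t
        _ ≤ 2 := ht.2
    have hden : (0:ℝ) < (t-1)^2 := by
      have : t - 1 > 0 := by linarith
      positivity
    rw [hfun, div_le_iff₀ hden]
    calc (Real.log t)^2 * t^(2*α) ≤ (t-1)^2 * 2 := by
          apply mul_le_mul (pow_le_pow_left₀ hlog0 hlog 2) hrp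
            (Real.rpow_nonneg (by linarith) _) (by positivity)
      _ = 2 * (t-1)^2 := mul_comm _ _
  · set δ : ℝ := (1 - 2*α)/4 with hδ
    have hδ0 : 0 < δ := by rw [hδ]; linarith
    apply Integrable.mono'
      (g := fun t => (4/δ^2) * t ^ (2*δ + 2*α - 2))
    · exact (integrableOn_Ioi_rpow_of_lt (by rw [hδ]; linarith) (by norm_num)).const_mul _
    · exact (hfun_meas α).aestronglyMeasurable
    · filter_upwards [ae_restrict_mem measurableSet_Ioi] with t ht
      have h2t : (2:ℝ) < t := ht
      have ht0 : (0:ℝ) < t := by linarith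
      rw [Real.norm_eq_abs, abs_of_nonneg (hfun_nonneg ht0.le)]
      have hlog : Real.log t ≤ t^δ / δ := by
        have h1 := Real.log_le_sub_one_of_pos (Real.rpow_pos_of_pos ht0 δ)
        rw [Real.log_rpow ht0] at h1
        rw [le_div_iff₀ hδ0]
        have := Real.rpow_nonneg ht0.le δ
        nlinarith
      have hlog0 : 0 ≤ Real.log t := Real.log_nonneg (by linarith)
      have hlogsq : (Real.log t)^2 ≤ (t^δ)^2 / δ^2 := by
        rw [← div_pow]
        exact pow_le_pow_left₀ hlog0 hlog 2
      have hden : t^2/4 ≤ (t-1)^2 := by nlinarith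
      have step : hfun α t ≤ ((t^δ)^2/δ^2 * t^(2*α)) / (t^2/4) := by
        rw [hfun]
        apply div_le_div₀ (by positivity)
          (mul_le_mul_of_nonneg_right hlogsq (Real.rpow_nonneg ht0.le _))
          (by positivity) hden
      refine step.trans (le_of_eq ?_)
      have e1 : (t^δ)^2 = t^(2*δ) := by
        rw [← Real.rpow_natCast (t^δ) 2, ← Real.rpow_mul ht0.le]
        norm_num [mul_comm]
      have e2 : t^(2*δ) * t^(2*α) = t^(2*δ+2*α) := (Real.rpow_add ht0 _ _).symm
      have e3 : t^(2*δ+2*α-2) = t^(2*δ+2*α) / t^((2:ℕ):ℝ) := by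
        rw [← Real.rpow_sub ht0]; norm_num
      have e4 : t^((2:ℕ):ℝ) = t^(2:ℕ) := Real.rpow_natCast t 2
      rw [e1, e3, ← e2, e4]
      have h4 : (t:ℝ)^(2:ℕ) ≠ 0 := by positivity
      have hδ2 : δ^2 ≠ 0 := by positivity
      field_simp

open Set in
/-- Translation of an integral over `Ioi`. -/
lemma integral_Ioi_comp_add (f : ℝ → ℝ) (a d : ℝ) :
    ∫ y in Ioi a, f (y + d) = ∫ v in Ioi (a + d), f v := by
  have A : MeasurableEmbedding fun y : ℝ => y + d :=
    (Homeomorph.addRight d).measurableEmbedding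
  have key := A.setIntegral_map (μ := volume) (g := f) (s := Ioi (a + d))
  rw [map_add_right_eq_self volume d] at key
  have hpre : (fun y : ℝ => y + d) ⁻¹' (Ioi (a + d)) = Ioi a := by
    ext y
    simp only [Set.mem_preimage, Set.mem_Ioi]
    constructor <;> intro h <;> linarith
  rw [key, hpre]

open Set in
lemma integrableOn_Ioi_comp_add {f : ℝ → ℝ} {a d : ℝ}
    (hf : IntegrableOn f (Ioi (a + d))) :
    IntegrableOn (fun y => f (y + d)) (Ioi a) := by
  have h1 : MeasurePreserving (fun y : ℝ => y + d) volume volume :=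
    measurePreserving_add_right volume d
  have A : MeasurableEmbedding fun y : ℝ => y + d :=
    (Homeomorph.addRight d).measurableEmbedding
  have key := (h1.integrableOn_comp_preimage A (f := f) (s := Ioi (a + d))).mpr hf
  have hpre : (fun y : ℝ => y + d) ⁻¹' (Ioi (a + d)) = Ioi a := by
    ext y
    simp only [Set.mem_preimage, Set.mem_Ioi]
    constructor <;> intro h <;> linarith
  rw [hpre] at key
  exact key

open Set in
/-- Inner integral computation. -/
lemma inner_integral {α : ℝ} (hα0 : 0 < α) (hα : α < 1/2) {R x : ℝ}
    (hu1 : 1 ≤ x - R + 1) :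
    IntegrableOn (fun y => hfun α ((y - R + 1)/(x - R + 1)) / (x - R + 1)^2) (Ioi x) ∧
    ∫ y in Ioi x, hfun α ((y - R + 1)/(x - R + 1)) / (x - R + 1)^2
      = (∫ t in Ioi 1, hfun α t) / (x - R + 1) := by
  set u : ℝ := x - R + 1 with hu
  have hu0 : 0 < u := lt_of_lt_of_le one_pos hu1
  set F : ℝ → ℝ := fun v => hfun α (u⁻¹ * v) / u^2 with hF
  have hcomp : ∀ y : ℝ, hfun α ((y - R + 1)/u) / u^2 = F (y + (1 - R)) := by
    intro y
    rw [hF]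
    dsimp only
    congr 2
    rw [div_eq_inv_mul]
    ring_nf
  have hx1 : x + (1 - R) = u := by rw [hu]; ring
  have hbase : IntegrableOn (hfun α) (Ioi (u⁻¹ * u)) := by
    rw [inv_mul_cancel₀ hu0.ne']
    exact hfun_integrableOn hα0 hα
  have hFint : IntegrableOn F (Ioi u) := by
    have h1 : IntegrableOn (fun v => hfun α (u⁻¹ * v)) (Ioi u) :=
      (integrableOn_Ioi_comp_mul_left_iff (hfun α) u (inv_pos.mpr hu0)).mpr hbase
    exact h1.div_const (u^2)
  constructor
  · have h2 : IntegrableOn (fun y => F (y + (1 - R))) (Ioi x) :=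
      integrableOn_Ioi_comp_add (by rwa [hx1])
    refine h2.congr_fun (fun y _ => ?_) measurableSet_Ioi
    exact (hcomp y).symm
  · calc ∫ y in Ioi x, hfun α ((y - R + 1)/u) / u^2
        = ∫ y in Ioi x, F (y + (1 - R)) := by simp_rw [hcomp]
      _ = ∫ v in Ioi (x + (1 - R)), F v := integral_Ioi_comp_add F x (1 - R)
      _ = ∫ v in Ioi u, F v := by rw [hx1]
      _ = (∫ v in Ioi u, hfun α (u⁻¹ * v)) / u^2 := by
          rw [hF]; exact integral_div _ _
      _ = (u⁻¹)⁻¹ • (∫ t in Ioi (u⁻¹ * u), hfun α t) / u^2 := by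
          rw [integral_comp_mul_left_Ioi (hfun α) u (inv_pos.mpr hu0)]
      _ = (∫ t in Ioi 1, hfun α t) / u := by
          rw [inv_mul_cancel₀ hu0.ne', inv_inv, smul_eq_mul]
          field_simp

lemma phi_eq_of_mem {R T z : ℝ} (hz : R ≤ z) (hzT : z ≤ T) :
    phi R T z = 1 - Real.log (z - R + 1) / Real.log (T - R + 1) := by
  unfold phi
  rcases le_or_gt z R with h | h
  · have hzR : z = R := le_antisymm h hz
    subst hzR
    simp
  · rw [if_neg (not_le.mpr h), if_pos hzT]

lemma phi_eq_zero_of_gt {R T z : ℝ} (hR : R < T) (hz : T < z) : phi R T z = 0 := by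
  unfold phi
  rw [if_neg (by linarith), if_neg (by linarith)]

/-- Bound on the difference of the cutoff. -/
lemma phi_diff_le {R T x y : ℝ} (hR : 0 < R) (hRT : R + 2 ≤ T) (hx : R ≤ x) (hxy : x ≤ y) :
    |phi R T x - phi R T y| ≤
      (Real.log (y - R + 1) - Real.log (x - R + 1)) / Real.log (T - R + 1) := by
  have hL : 0 < Real.log (T - R + 1) := Real.log_pos (by linarith)
  have hu1 : (1:ℝ) ≤ x - R + 1 := by linarith
  have hlogm : Real.log (x - R + 1) ≤ Real.log (y - R + 1) :=
    Real.log_le_log (by linarith) (by linarith)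
  rcases le_or_gt y T with hyT | hyT
  · have hxT : x ≤ T := hxy.trans hyT
    rw [phi_eq_of_mem hx hxT, phi_eq_of_mem (hx.trans hxy) hyT]
    have heq : (1 - Real.log (x - R + 1) / Real.log (T - R + 1))
        - (1 - Real.log (y - R + 1) / Real.log (T - R + 1))
        = (Real.log (y - R + 1) - Real.log (x - R + 1)) / Real.log (T - R + 1) := by
      field_simp
      ring
    rw [heq, abs_of_nonneg (div_nonneg (sub_nonneg.mpr hlogm) hL.le)]
  · rw [phi_eq_zero_of_gt (by linarith) hyT]
    rcases le_or_gt x T with hxT | hxT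
    · rw [phi_eq_of_mem hx hxT, sub_zero]
      have hux : Real.log (x - R + 1) ≤ Real.log (T - R + 1) :=
        Real.log_le_log (by linarith) (by linarith)
      have hTy : Real.log (T - R + 1) ≤ Real.log (y - R + 1) :=
        Real.log_le_log (by linarith) (by linarith)
      have h0 : 0 ≤ 1 - Real.log (x - R + 1) / Real.log (T - R + 1) := by
        rw [sub_nonneg, div_le_one hL]
        exact hux
      rw [abs_of_nonneg h0, le_div_iff₀ hL, sub_mul, div_mul_cancel₀ _ hL.ne']
      linarith
    · rw [phi_eq_zero_of_gt (by linarith) hxT, sub_zero, abs_zero]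
      exact div_nonneg (sub_nonneg.mpr hlogm) hL.le

set_option maxHeartbeats 1000000 in
open Set in
theorem stmt_0 (R : ℝ) (hR : 0 < R) (Pi : ℝ → ℝ → ℝ)
    (hmeas : Measurable fun p : ℝ × ℝ => Pi p.1 p.2)
    (α c : ℝ) (hα0 : 0 < α) (hα : α < 1 / 2) (hc : 0 < c)
    (hbound : ∀ x y : ℝ, R ≤ x → x < y →
      |Pi x y| ≤ c * ((x / y) ^ (2 * α) + (y / x) ^ (2 * α)) / (x - y) ^ 2) :
    Tendsto (fun T : ℝ =>
        ∫ p in {p : ℝ × ℝ | R ≤ p.1 ∧ p.1 ≤ p.2},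
          |phi R T p.1 - phi R T p.2| ^ 2 * |Pi p.1 p.2|)
      atTop (nhds 0) := by
  classical
  have hα' : α < 1/2 := by linarith
  set S : Set (ℝ × ℝ) := {p : ℝ × ℝ | R ≤ p.1 ∧ p.1 ≤ p.2} with hS
  have hSmeas : MeasurableSet S :=
    (measurableSet_le measurable_const measurable_fst).inter
      (measurableSet_le measurable_fst measurable_snd)
  set A : ℝ := ∫ t in Ioi 1, hfun α t with hA
  have hA0 : 0 ≤ A :=
    setIntegral_nonneg measurableSet_Ioi fun t ht =>
      hfun_nonneg (by have := mem_Ioi.mp ht; linarith)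
  have hm0 : 0 < min 1 R := lt_min one_pos hR
  have hM0 : (0:ℝ) < max 1 R := lt_of_lt_of_le one_pos (le_max_left _ _)
  set B : ℝ := (max 1 R / min 1 R) ^ (2*α) with hB
  have hB1 : 1 ≤ B := by
    apply Real.one_le_rpow
    · rw [le_div_iff₀ hm0, one_mul]
      exact min_le_max
    · positivity
  have hB0 : 0 < B := lt_of_lt_of_le one_pos hB1
  set K : ℝ := 2 * c * B with hK
  have hK0 : 0 < K := by positivity
  have hnn : ∀ T : ℝ,
      0 ≤ ∫ p in S, |phi R T p.1 - phi R T p.2| ^ 2 * |Pi p.1 p.2| := fun T =>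
    setIntegral_nonneg hSmeas fun p _ => by positivity
  apply squeeze_zero' (Eventually.of_forall hnn)
    (g := fun T => K * A / Real.log (T - R + 1))
  swap
  · apply Tendsto.div_atTop (tendsto_const_nhds)
    exact Real.tendsto_log_atTop.comp
      (tendsto_atTop_add_const_right atTop _ (tendsto_id.atTop_add tendsto_const_nhds))
  filter_upwards [eventually_ge_atTop (R + 2)] with T hT
  set L : ℝ := Real.log (T - R + 1) with hLdef
  have hL0 : 0 < L := Real.log_pos (by linarith)
  -- the dominating function
  set g : ℝ × ℝ → ℝ := fun p =>
    if R ≤ p.1 ∧ p.1 ≤ T ∧ p.1 < p.2 then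
      K / L^2 * (hfun α ((p.2 - R + 1)/(p.1 - R + 1)) / (p.1 - R + 1)^2)
    else 0 with hg
  have hg_nonneg : ∀ p, 0 ≤ g p := by
    intro p
    rw [hg]
    dsimp only
    split_ifs with h
    · obtain ⟨h1, _, h3⟩ := h
      have hvpos : (0:ℝ) ≤ (p.2 - R + 1)/(p.1 - R + 1) := by
        apply div_nonneg <;> linarith
      exact mul_nonneg (by positivity)
        (div_nonneg (hfun_nonneg hvpos) (by positivity))
    · exact le_rfl
  have hgmeas : Measurable g := by
    rw [hg]
    apply Measurable.ite
    · exact (measurableSet_le measurable_const measurable_fst).inter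
        ((measurableSet_le measurable_fst measurable_const).inter
          (measurableSet_lt measurable_fst measurable_snd))
    · apply Measurable.const_mul
      apply Measurable.div
      · exact (hfun_meas α).comp
          (((measurable_snd.sub_const R).add_const 1).div
            ((measurable_fst.sub_const R).add_const 1))
      · exact ((measurable_fst.sub_const R).add_const 1).pow_const 2
    · exact measurable_const
  -- fibers of g
  have hfiber : ∀ x : ℝ, R ≤ x → x ≤ T →
      (fun y => g (x, y)) = (Ioi x).indicator
        (fun y => K/L^2 * (hfun α ((y - R + 1)/(x - R + 1))/(x - R + 1)^2)) := by
    intro x hx1 hx2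
    funext y
    rw [hg]
    simp only [Set.indicator]
    by_cases hy : x < y
    · rw [if_pos ⟨hx1, hx2, hy⟩, if_pos (mem_Ioi.mpr hy)]
    · rw [if_neg (by tauto), if_neg (by simpa using hy)]
  have hfiber0 : ∀ x : ℝ, ¬(R ≤ x ∧ x ≤ T) → (fun y => g (x, y)) = fun _ => 0 := by
    intro x hx
    funext y
    rw [hg]
    dsimp only
    rw [if_neg (by tauto)]
  have hinner : ∀ x ∈ Icc R T, Integrable (fun y => g (x, y)) volume ∧
      ∫ y, g (x, y) = K/L^2 * (A / (x - R + 1)) := by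
    intro x hx
    have hu1 : (1:ℝ) ≤ x - R + 1 := by linarith [hx.1]
    obtain ⟨hint, hval⟩ := inner_integral hα0 hα' hu1
    rw [hfiber x hx.1 hx.2]
    constructor
    · rw [integrable_indicator_iff measurableSet_Ioi]
      exact hint.const_mul _
    · rw [integral_indicator measurableSet_Ioi, integral_const_mul, hval]
  have houter : (fun x => ∫ y, g (x, y))
      = (Icc R T).indicator (fun x => K/L^2 * (A/(x - R + 1))) := by
    funext x
    rw [Set.indicator]
    split_ifs with hx
    · exact (hinner x hx).2
    · rw [hfiber0 x (by simpa [mem_Icc] using hx)]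
      simp
  have houter_int : Integrable
      ((Icc R T).indicator fun x => K/L^2 * (A/(x - R + 1))) volume := by
    rw [integrable_indicator_iff measurableSet_Icc]
    refine Measure.integrableOn_of_bounded (M := K/L^2 * A) measure_Icc_lt_top.ne
      (((measurable_const.div ((measurable_id.sub_const R).add_const 1)).const_mul _).aestronglyMeasurable) ?_
    filter_upwards [ae_restrict_mem measurableSet_Icc] with x hx
    have hu1 : (1:ℝ) ≤ x - R + 1 := by linarith [hx.1]
    rw [Real.norm_eq_abs, abs_of_nonneg (by positivity)]
    exact mul_le_mul_of_nonneg_left (div_le_self hA0 hu1) (by positivity)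
  have hIcc_val : ∫ x in Icc R T, (1:ℝ)/(x - R + 1) = L := by
    have e0 : ∫ x in Icc R T, (1:ℝ)/(x - R + 1)
        = ∫ x in Ioc R T, (1:ℝ)/(x - R + 1) := integral_Icc_eq_integral_Ioc
    have e1 : ∫ x in Ioc R T, (1:ℝ)/(x - R + 1)
        = ∫ x in R..T, (1:ℝ)/(x - R + 1) := by
      rw [intervalIntegral.integral_of_le (by linarith)]
    have e2 : ∀ x : ℝ, (1:ℝ)/(x - R + 1) = (fun z => 1/z) (x + (1 - R)) := by
      intro x; congr 1; ring
    rw [e0, e1]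
    calc ∫ x in R..T, (1:ℝ)/(x - R + 1)
        = ∫ x in R..T, (fun z => (1:ℝ)/z) (x + (1 - R)) := by simp_rw [← e2]
      _ = ∫ z in (R + (1 - R))..(T + (1 - R)), (1:ℝ)/z :=
          intervalIntegral.integral_comp_add_right _ _
      _ = ∫ z in (1:ℝ)..(T - R + 1), (1:ℝ)/z := by
          rw [show R + (1 - R) = (1:ℝ) by ring, show T + (1 - R) = T - R + 1 by ring]
      _ = Real.log ((T - R + 1)/1) := by
          apply integral_one_div
          have h13 : (1:ℝ) ≤ T - R + 1 := by linarith
          rw [Set.uIcc_of_le h13]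
          simp only [Set.mem_Icc, not_and, not_le]
          intro h
          linarith
      _ = L := by rw [div_one]
  have houter_val :
      ∫ x, (Icc R T).indicator (fun x => K/L^2 * (A/(x - R + 1))) x
        = K/L^2 * A * L := by
    rw [integral_indicator measurableSet_Icc]
    have e : ∀ x : ℝ, K/L^2 * (A/(x - R + 1)) = (K/L^2 * A) * (1/(x - R + 1)) := by
      intro x; ring
    simp_rw [e]
    rw [integral_const_mul, hIcc_val]
  have hgmeas' : AEStronglyMeasurable g ((volume : Measure ℝ).prod volume) := by
    rw [← Measure.volume_eq_prod]
    exact hgmeas.aestronglyMeasurable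
  have hg_int2 : Integrable g ((volume : Measure ℝ).prod volume) := by
    rw [integrable_prod_iff hgmeas']
    constructor
    · apply Eventually.of_forall
      intro x
      by_cases hx : R ≤ x ∧ x ≤ T
      · exact (hinner x ⟨hx.1, hx.2⟩).1
      · rw [hfiber0 x hx]
        exact integrable_zero _ _ _
    · have e : (fun x => ∫ y, ‖g (x, y)‖) = fun x => ∫ y, g (x, y) := by
        funext x
        congr 1
        funext y
        rw [Real.norm_eq_abs, abs_of_nonneg (hg_nonneg _)]
      rw [e, houter]
      exact houter_int
  have hg_int : Integrable g (volume : Measure (ℝ × ℝ)) := by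
    rw [Measure.volume_eq_prod]
    exact hg_int2
  have hg_val : ∫ p, g p = K/L^2 * A * L := by
    rw [Measure.volume_eq_prod, integral_prod g hg_int2]
    have : (fun x => ∫ y, g (x, y))
        = (Icc R T).indicator (fun x => K/L^2 * (A/(x - R + 1))) := houter
    rw [this]
    exact houter_val
  -- pointwise domination on S
  have hdom : ∀ p ∈ S, |phi R T p.1 - phi R T p.2| ^ 2 * |Pi p.1 p.2| ≤ g p := by
    rintro ⟨x, y⟩ hp
    obtain ⟨hx, hxy⟩ : R ≤ x ∧ x ≤ y := hp
    dsimp only at hx hxy ⊢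
    rw [hg]
    dsimp only
    by_cases hcond : R ≤ x ∧ x ≤ T ∧ x < y
    · rw [if_pos hcond]
      obtain ⟨_, hxT, hxy'⟩ := hcond
      have hu1 : (1:ℝ) ≤ x - R + 1 := by linarith
      have hu0 : (0:ℝ) < x - R + 1 := by linarith
      have hv0 : (0:ℝ) < y - R + 1 := by linarith
      have hx0 : (0:ℝ) < x := by linarith
      have hy0 : (0:ℝ) < y := by linarith
      have huv : x - R + 1 < y - R + 1 := by linarith
      have hDel := phi_diff_le hR hT hx hxy
      have hPib := hbound x y hx hxy'
      set u : ℝ := x - R + 1 with hudef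
      set v : ℝ := y - R + 1 with hvdef
      set D : ℝ := Real.log v - Real.log u with hD
      have hD0 : 0 ≤ D := sub_nonneg.mpr (Real.log_le_log (by positivity) huv.le)
      have hQ0 : (0:ℝ) < (x - y)^2 := by
        have : x - y ≠ 0 := by intro h; linarith [hxy', sub_eq_zero.mp h]
        positivity
      have hnum : (x/y)^(2*α) + (y/x)^(2*α) ≤ 2*B*((v/u)^(2*α)) := by
        have h1 : (x/y)^(2*α) ≤ 1 :=
          Real.rpow_le_one (by positivity) (by rw [div_le_one hy0]; exact hxy) (by positivity)
        have h2 : (1:ℝ) ≤ (v/u)^(2*α) :=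
          Real.one_le_rpow (by rw [le_div_iff₀ hu0, one_mul]; exact huv.le) (by positivity)
        have hyM : y ≤ max 1 R * v := by
          rcases le_total R 1 with h | h
          · rw [max_eq_left h, one_mul]; simp only [v]; linarith
          · rw [max_eq_right h]; simp only [v]; nlinarith
        have hmx : min 1 R * u ≤ x := by
          rcases le_total R 1 with h | h
          · rw [min_eq_right h]; simp only [u]; nlinarith
          · rw [min_eq_left h, one_mul]; simp only [u]; linarith
        have h3 : y/x ≤ (max 1 R / min 1 R) * (v/u) := by
          rw [div_mul_div_comm]
          exact div_le_div₀ (by positivity) hyM (by positivity) hmx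
        have h4 : (y/x)^(2*α) ≤ B * (v/u)^(2*α) := by
          calc (y/x)^(2*α) ≤ ((max 1 R / min 1 R) * (v/u))^(2*α) :=
                Real.rpow_le_rpow (by positivity) h3 (by positivity)
            _ = B * (v/u)^(2*α) := Real.mul_rpow (by positivity) (by positivity)
        have h5 : (1:ℝ) ≤ B * (v/u)^(2*α) := by
          calc (1:ℝ) = 1 * 1 := (one_mul 1).symm
            _ ≤ B * (v/u)^(2*α) := mul_le_mul hB1 h2 zero_le_one hB0.le
        calc (x/y)^(2*α) + (y/x)^(2*α) ≤ 1 + B * (v/u)^(2*α) := add_le_add h1 h4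
          _ ≤ B * (v/u)^(2*α) + B * (v/u)^(2*α) := add_le_add_left h5 _
          _ = 2*B*((v/u)^(2*α)) := by ring
      have step1 : |phi R T x - phi R T y| ^ 2 * |Pi x y|
          ≤ (D/L)^2 * (c * ((x/y)^(2*α) + (y/x)^(2*α))/(x - y)^2) := by
        apply mul_le_mul _ hPib (abs_nonneg _) (by positivity)
        exact pow_le_pow_left₀ (abs_nonneg _) hDel 2
      have step2 : (D/L)^2 * (c * ((x/y)^(2*α) + (y/x)^(2*α))/(x - y)^2)
          ≤ (D/L)^2 * (c * (2*B*((v/u)^(2*α)))/(x - y)^2) := by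
        gcongr
      have step3 : (D/L)^2 * (c * (2*B*((v/u)^(2*α)))/(x - y)^2)
          = K / L^2 * (hfun α (v/u) / u^2) := by
        have hlogvu : Real.log (v/u) = D := Real.log_div hv0.ne' hu0.ne'
        have hvu1 : v/u - 1 = (y - x)/u := by
          field_simp
          rw [hudef, hvdef]
          ring
        rw [hfun, hlogvu, hvu1, hK]
        have hyx : ((y - x)/u)^2 = (x - y)^2/u^2 := by
          rw [div_pow]
          congr 1
          ring
        rw [hyx]
        field_simp
      calc |phi R T x - phi R T y| ^ 2 * |Pi x y|
          ≤ (D/L)^2 * (c * ((x/y)^(2*α) + (y/x)^(2*α))/(x - y)^2) := step1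
        _ ≤ (D/L)^2 * (c * (2*B*((v/u)^(2*α)))/(x - y)^2) := step2
        _ = K / L^2 * (hfun α (v/u) / u^2) := step3
    · rw [if_neg hcond]
      push_neg at hcond
      by_cases h1 : x < y
      · have hTx : T < x :=
          lt_of_not_ge fun h2 => absurd (hcond hx h2) (not_le.mpr h1)
        rw [phi_eq_zero_of_gt (by linarith) hTx,
          phi_eq_zero_of_gt (by linarith) (lt_of_lt_of_le hTx hxy)]
        simp
      · have hxy2 : x = y := le_antisymm hxy (not_lt.mp h1)
        subst hxy2
        simp
  calc ∫ p in S, |phi R T p.1 - phi R T p.2| ^ 2 * |Pi p.1 p.2|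
      ≤ ∫ p in S, g p := by
        apply integral_mono_of_nonneg
        · apply Eventually.of_forall
          intro p
          positivity
        · exact hg_int.integrableOn
        · rw [EventuallyLE, ae_restrict_iff' hSmeas]
          exact Eventually.of_forall hdom
    _ ≤ ∫ p, g p := setIntegral_le_integral hg_int (Eventually.of_forall hg_nonneg)
    _ = K/L^2 * A * L := hg_val
    _ = K * A / L := by field_simp
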